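/- For any matrix M(t) satisfying the Riccati equation M' = κ − M² with κ symmetric positive semidefinite, the function t ↦ exp(∫₀ᵗ trace(M(s)) ds) · det(M(t)) is nondecreasing in t. -/

import Mathlib

open Matrix

lemma det_updateRow_eq_sum {n : ℕ} (A : Matrix (Fin n) (Fin n) ℝ) (j : Fin n) (v : Fin n → ℝ) :
    (A.updateRow j v).det = ∑ k, adjugate A k j * v k := by
  calc (A.updateRow j v).det = (Aᵀ.updateCol j v).det := by
        rw [updateCol_transpose, det_transpose]
    _ = cramer Aᵀ v j := (cramer_apply _ _ _).symm
    _ = (adjugate Aᵀ *ᵥ v) j := by rw [cramer_eq_adjugate_mulVec]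
    _ = ∑ k, adjugate A k j * v k := by
        rw [← adjugate_transpose]
        simp [mulVec, dotProduct, transpose_apply]

lemma trace_adjugate_mul {n : ℕ} (A B : Matrix (Fin n) (Fin n) ℝ) :
    (adjugate A * B).trace = ∑ j, (A.updateRow j (B j)).det := by
  simp only [det_updateRow_eq_sum, Matrix.trace, Matrix.diag, Matrix.mul_apply]
  rw [Finset.sum_comm]

lemma trace_mul_nonneg_psd {n : ℕ} {A B : Matrix (Fin n) (Fin n) ℝ}
    (hA : A.PosSemidef) (hB : B.PosSemidef) : 0 ≤ (A * B).trace := by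
  open scoped MatrixOrder in
  obtain ⟨C, rfl⟩ := CStarAlgebra.nonneg_iff_eq_star_mul_self.mp hA.nonneg
  rw [Matrix.mul_assoc, Matrix.trace_mul_comm]
  have hP := hB.mul_mul_conjTranspose_same C
  have hdiag : ∀ i, 0 ≤ (C * B * Cᴴ) i i := by
    intro i
    have h2 := hP.dotProduct_mulVec_nonneg (Pi.single i 1)
    simpa [Matrix.mulVec_single, dotProduct, Pi.single_apply] using h2
  exact Finset.sum_nonneg fun i _ => hdiag i

lemma hasDerivAt_det_aux {n : ℕ} {A : ℝ → Matrix (Fin n) (Fin n) ℝ}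
    {B : Matrix (Fin n) (Fin n) ℝ} {t : ℝ}
    (h : ∀ i j, HasDerivAt (fun s => A s i j) (B i j) t) :
    HasDerivAt (fun s => (A s).det) ((Matrix.adjugate (A t) * B).trace) t := by
  classical
  let f : ContinuousMultilinearMap ℝ (fun _ : Fin n => (Fin n → ℝ)) ℝ :=
    { toMultilinearMap :=
        (Matrix.detRowAlternating : (Fin n → ℝ) [⋀^Fin n]→ₗ[ℝ] ℝ).toMultilinearMap
      cont := by
        have h2 : Continuous fun A : Matrix (Fin n) (Fin n) ℝ => A.det :=
          Continuous.matrix_det continuous_id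
        exact h2 }
  have hrows : HasFDerivAt (fun s (i : Fin n) (j : Fin n) => A s i j)
      (ContinuousLinearMap.pi fun i => ContinuousLinearMap.pi fun j =>
        (1 : ℝ →L[ℝ] ℝ).smulRight (B i j)) t := by
    apply hasFDerivAt_pi.2
    intro i
    exact hasFDerivAt_pi.2 fun j => (h i j).hasFDerivAt
  have hcomp := (f.hasFDerivAt (x := fun i j => A t i j)).comp t hrows
  have hD := hcomp.hasDerivAt
  have hfun : (⇑f ∘ fun s (i : Fin n) (j : Fin n) => A s i j) = fun s => (A s).det := rfl
  rw [hfun] at hD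
  convert hD using 1
  rfl
  rfl
  rw [ContinuousLinearMap.coe_comp', Function.comp_apply]
  have hB1 : (ContinuousLinearMap.pi fun i => ContinuousLinearMap.pi fun j =>
      (1 : ℝ →L[ℝ] ℝ).smulRight (B i j)) 1 = B := by
    ext i j
    simp
  rw [hB1]
  erw [f.linearDeriv_apply]
  rw [trace_adjugate_mul]
  rfl

theorem riccati_exp_trace_det_monotone (n : ℕ) (M κ : ℝ → Matrix (Fin n) (Fin n) ℝ)
    (hderiv : ∀ t, ∀ i j, HasDerivAt (fun s => M s i j) ((κ t - M t * M t) i j) t)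
    (hκ : ∀ t, (κ t).PosSemidef) (hM : ∀ t, (M t).PosDef) :
    Monotone (fun t => Real.exp (∫ s in (0:ℝ)..t, (M s).trace) * (M t).det) := by
  have hcont : Continuous fun s => (M s).trace := by
    apply continuous_finset_sum
    intro i _
    exact continuous_iff_continuousAt.2 fun t => (hderiv t i i).continuousAt
  have key : ∀ t, HasDerivAt (fun t => Real.exp (∫ s in (0:ℝ)..t, (M s).trace) * (M t).det)
      (Real.exp (∫ s in (0:ℝ)..t, (M s).trace) * (adjugate (M t) * κ t).trace) t := by
    intro t
    have hI : HasDerivAt (fun u => ∫ s in (0:ℝ)..u, (M s).trace) ((M t).trace) t :=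
      (hcont.integral_hasStrictDerivAt 0 t).hasDerivAt
    have hE := hI.exp
    have hDet : HasDerivAt (fun u => (M u).det)
        ((adjugate (M t) * (κ t - M t * M t)).trace) t :=
      hasDerivAt_det_aux (fun i j => hderiv t i j)
    have hmul := hE.mul hDet
    convert hmul using 1
    rfl
    rfl
    rfl
    have h1 : adjugate (M t) * (κ t - M t * M t)
        = adjugate (M t) * κ t - (M t).det • (M t) := by
      rw [Matrix.mul_sub]
      congr 1
      rw [← Matrix.mul_assoc, adjugate_mul, Matrix.smul_mul, Matrix.one_mul]
    rw [h1, trace_sub, trace_smul, smul_eq_mul]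
    ring
  have hnonneg : ∀ t, 0 ≤ Real.exp (∫ s in (0:ℝ)..t, (M s).trace)
      * (adjugate (M t) * κ t).trace := by
    intro t
    apply mul_nonneg (Real.exp_nonneg _)
    have hdet := (hM t).det_pos
    have hadj : adjugate (M t) = (M t).det • (M t)⁻¹ := by
      rw [Matrix.inv_def, smul_smul, Ring.inverse_eq_inv', mul_inv_cancel₀ hdet.ne', one_smul]
    rw [hadj, Matrix.smul_mul, trace_smul, smul_eq_mul]
    exact mul_nonneg hdet.le (trace_mul_nonneg_psd ((hM t).posSemidef).inv (hκ t))
  refine monotone_of_deriv_nonneg (fun t => (key t).differentiableAt) fun t => ?_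
  rw [(key t).deriv]
  exact hnonneg t
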